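/- The tilted semicircular density f_Θ(λ) = (1/(2πμλ²))·√((λ/σ₁ - 1)(1 - λ/σ₂)) on [σ₁, σ₂], with μ = (√σ₂ - √σ₁)²/(4σ₁σ₂), integrates to 1. -/

import Mathlib

open Real
open Set

noncomputable def Ftilt (a b : ℝ) (x : ℝ) : ℝ :=
  -Real.sqrt ((x - a) * (b - x)) / x - Real.arcsin ((2 * x - (a + b)) / (b - a))
    + (a + b) / (2 * Real.sqrt (a * b)) * Real.arcsin (((a + b) * x - 2 * (a * b)) / ((b - a) * x))

set_option maxHeartbeats 1000000 in
lemma Ftilt_deriv (a b : ℝ) (ha : 0 < a) (hab : a < b) {x : ℝ} (hx : x ∈ Set.Ioo a b) :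
    HasDerivAt (Ftilt a b) (Real.sqrt ((x - a) * (b - x)) / x ^ 2) x := by
  obtain ⟨hxa, hxb⟩ := hx
  have hb : 0 < b := ha.trans hab
  have hx0 : 0 < x := ha.trans hxa
  have hba : 0 < b - a := by linarith
  have hR : 0 < (x - a) * (b - x) := by nlinarith
  have hsR : 0 < Real.sqrt ((x - a) * (b - x)) := Real.sqrt_pos.2 hR
  have hsR2 : Real.sqrt ((x - a) * (b - x)) ^ 2 = (x - a) * (b - x) := Real.sq_sqrt hR.le
  have hab0 : 0 < a * b := mul_pos ha hb
  have hsab : 0 < Real.sqrt (a * b) := Real.sqrt_pos.2 hab0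
  have hsab2 : Real.sqrt (a * b) ^ 2 = a * b := Real.sq_sqrt hab0.le
  have hd1 : HasDerivAt (fun y => (y - a) * (b - y)) (a + b - 2 * x) x := by
    have h : HasDerivAt (fun y => (y - a) * (b - y)) (1 * (b - x) + (x - a) * (0 - 1)) x :=
      ((hasDerivAt_id x).sub_const a).mul ((hasDerivAt_const x b).sub (hasDerivAt_id x))
    convert h using 1; ring
  have hd2 : HasDerivAt (fun y => Real.sqrt ((y - a) * (b - y)))
      (1 / (2 * Real.sqrt ((x - a) * (b - x))) * (a + b - 2 * x)) x :=
    (Real.hasDerivAt_sqrt hR.ne').comp x hd1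
  have hd3 : HasDerivAt (fun y => -Real.sqrt ((y - a) * (b - y)) / y)
      ((-(1 / (2 * Real.sqrt ((x - a) * (b - x))) * (a + b - 2 * x)) * x
        - -Real.sqrt ((x - a) * (b - x)) * 1) / x ^ 2) x :=
    hd2.neg.div (hasDerivAt_id x) hx0.ne'
  have hu1lt : (2 * x - (a + b)) / (b - a) < 1 := by rw [div_lt_one hba]; linarith
  have hu1gt : -1 < (2 * x - (a + b)) / (b - a) := by rw [lt_div_iff₀ hba]; linarith
  have ha1 : HasDerivAt (fun y => (2 * y - (a + b)) / (b - a)) (2 / (b - a)) x := by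
    have h : HasDerivAt (fun y => (2 * y - (a + b)) / (b - a)) (2 * 1 / (b - a)) x :=
      (((hasDerivAt_id x).const_mul 2).sub_const (a + b)).div_const (b - a)
    convert h using 1; ring
  have hd4 : HasDerivAt (fun y => Real.arcsin ((2 * y - (a + b)) / (b - a)))
      (1 / Real.sqrt (1 - ((2 * x - (a + b)) / (b - a)) ^ 2) * (2 / (b - a))) x :=
    ((Real.hasDerivAt_arcsin hu1gt.ne' hu1lt.ne).comp x ha1 :)
  have e1 : (2 * Real.sqrt ((x - a) * (b - x)) / (b - a)) ^ 2
      = 4 * ((x - a) * (b - x)) / (b - a) ^ 2 := by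
    rw [div_pow, mul_pow, hsR2]; norm_num
  have hs1 : Real.sqrt (1 - ((2 * x - (a + b)) / (b - a)) ^ 2)
      = 2 * Real.sqrt ((x - a) * (b - x)) / (b - a) := by
    rw [show 1 - ((2 * x - (a + b)) / (b - a)) ^ 2
        = (2 * Real.sqrt ((x - a) * (b - x)) / (b - a)) ^ 2 by
      rw [e1]; field_simp; ring]
    exact Real.sqrt_sq (div_nonneg (by positivity) hba.le)
  have hu2lt : ((a + b) * x - 2 * (a * b)) / ((b - a) * x) < 1 := by
    rw [div_lt_one (mul_pos hba hx0)]; nlinarith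
  have hu2gt : -1 < ((a + b) * x - 2 * (a * b)) / ((b - a) * x) := by
    rw [lt_div_iff₀ (mul_pos hba hx0)]; nlinarith
  have ha2 : HasDerivAt (fun y => ((a + b) * y - 2 * (a * b)) / ((b - a) * y))
      (((a + b) * ((b - a) * x) - ((a + b) * x - 2 * (a * b)) * (b - a)) / ((b - a) * x) ^ 2) x := by
    have hnum : HasDerivAt (fun y => (a + b) * y - 2 * (a * b)) (a + b) x := by
      have h : HasDerivAt (fun y => (a + b) * y - 2 * (a * b)) ((a + b) * 1) x :=
        ((hasDerivAt_id x).const_mul (a + b)).sub_const (2 * (a * b))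
      convert h using 1; ring
    have hden : HasDerivAt (fun y => (b - a) * y) (b - a) x := by
      have h : HasDerivAt (fun y => (b - a) * y) ((b - a) * 1) x :=
        (hasDerivAt_id x).const_mul (b - a)
      convert h using 1; ring
    exact hnum.div hden (mul_pos hba hx0).ne'
  have hd5 : HasDerivAt (fun y => Real.arcsin (((a + b) * y - 2 * (a * b)) / ((b - a) * y)))
      (1 / Real.sqrt (1 - (((a + b) * x - 2 * (a * b)) / ((b - a) * x)) ^ 2)
        * (((a + b) * ((b - a) * x) - ((a + b) * x - 2 * (a * b)) * (b - a)) / ((b - a) * x) ^ 2)) x :=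
    ((Real.hasDerivAt_arcsin hu2gt.ne' hu2lt.ne).comp x ha2 :)
  have e2 : (2 * Real.sqrt (a * b) * Real.sqrt ((x - a) * (b - x)) / ((b - a) * x)) ^ 2
      = 4 * (a * b) * ((x - a) * (b - x)) / ((b - a) * x) ^ 2 := by
    rw [div_pow, mul_pow, mul_pow, hsR2, hsab2]; norm_num
  have hs2 : Real.sqrt (1 - (((a + b) * x - 2 * (a * b)) / ((b - a) * x)) ^ 2)
      = 2 * Real.sqrt (a * b) * Real.sqrt ((x - a) * (b - x)) / ((b - a) * x) := by
    rw [show 1 - (((a + b) * x - 2 * (a * b)) / ((b - a) * x)) ^ 2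
        = (2 * Real.sqrt (a * b) * Real.sqrt ((x - a) * (b - x)) / ((b - a) * x)) ^ 2 by
      rw [e2]; field_simp; ring]
    exact Real.sqrt_sq (div_nonneg (by positivity) (mul_pos hba hx0).le)
  have H := (hd3.sub hd4).add (hd5.const_mul ((a + b) / (2 * Real.sqrt (a * b))))
  rw [hs1, hs2] at H
  unfold Ftilt
  refine H.congr_deriv ?_
  set s := Real.sqrt ((x - a) * (b - x)) with hsdef
  set t := Real.sqrt (a * b) with htdef
  have hs2' : s ^ 2 = (x - a) * (b - x) := hsR2
  have ht2' : t ^ 2 = a * b := hsab2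
  have h3 : (-(1 / (2 * s) * (a + b - 2 * x)) * x - -s * 1) / x ^ 2
      = s / x ^ 2 - (a + b - 2 * x) / (2 * s * x) := by
    field_simp; ring
  have h4 : 1 / (2 * s / (b - a)) * (2 / (b - a)) = 1 / s := by
    field_simp
  have h5 : (a + b) / (2 * t) * (1 / (2 * t * s / ((b - a) * x))
        * (((a + b) * ((b - a) * x) - ((a + b) * x - 2 * (a * b)) * (b - a)) / ((b - a) * x) ^ 2))
      = (a + b) / (2 * s * x) := by
    rw [show (a + b) * ((b - a) * x) - ((a + b) * x - 2 * (a * b)) * (b - a)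
        = 2 * (a * b) * (b - a) by ring]
    rw [← ht2']
    field_simp
  rw [h3, h4, h5]
  field_simp
  ring

lemma key_integral (a b : ℝ) (ha : 0 < a) (hab : a < b) :
    ∫ x in a..b, Real.sqrt ((x - a) * (b - x)) / x ^ 2
      = π * ((a + b) - 2 * Real.sqrt (a * b)) / (2 * Real.sqrt (a * b)) := by
  have hb : 0 < b := ha.trans hab
  have hba : (0:ℝ) < b - a := by linarith
  have hsab : 0 < Real.sqrt (a * b) := Real.sqrt_pos.2 (mul_pos ha hb)
  have hc1 : Continuous fun x : ℝ => Real.sqrt ((x - a) * (b - x)) :=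
    Real.continuous_sqrt.comp (by continuity)
  have hint : IntervalIntegrable (fun x => Real.sqrt ((x - a) * (b - x)) / x ^ 2)
      MeasureTheory.volume a b := by
    apply ContinuousOn.intervalIntegrable
    have hc2 : Continuous fun x : ℝ => x ^ 2 := by continuity
    apply ContinuousOn.div hc1.continuousOn hc2.continuousOn
    intro x hx
    rw [uIcc_of_le hab.le] at hx
    exact pow_ne_zero _ (ha.trans_le hx.1).ne'
  have hcont : ContinuousOn (Ftilt a b) (Icc a b) := by
    unfold Ftilt
    have h1 : ContinuousOn (fun x => -Real.sqrt ((x - a) * (b - x)) / x) (Icc a b) :=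
      hc1.neg.continuousOn.div continuousOn_id (fun x hx => (ha.trans_le hx.1).ne')
    have h2 : Continuous fun x : ℝ => Real.arcsin ((2 * x - (a + b)) / (b - a)) :=
      Real.continuous_arcsin.comp (by continuity)
    have h3 : ContinuousOn
        (fun x => Real.arcsin (((a + b) * x - 2 * (a * b)) / ((b - a) * x))) (Icc a b) := by
      apply Real.continuous_arcsin.comp_continuousOn
      have hn : Continuous fun x : ℝ => (a + b) * x - 2 * (a * b) := by continuity
      have hd : Continuous fun x : ℝ => (b - a) * x := by continuity
      apply ContinuousOn.div hn.continuousOn hd.continuousOn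
      intro x hx
      exact mul_ne_zero hba.ne' (ha.trans_le hx.1).ne'
    exact (h1.sub h2.continuousOn).add (continuousOn_const.mul h3)
  rw [intervalIntegral.integral_eq_sub_of_hasDerivAt_of_le hab.le hcont
    (fun x hx => Ftilt_deriv a b ha hab hx) hint]
  unfold Ftilt
  rw [show (2 * b - (a + b)) / (b - a) = 1 by rw [div_eq_one_iff_eq hba.ne']; ring]
  rw [show (2 * a - (a + b)) / (b - a) = -1 by
    rw [div_eq_iff hba.ne']; ring]
  rw [show ((a + b) * b - 2 * (a * b)) / ((b - a) * b) = 1 by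
    rw [div_eq_one_iff_eq (mul_ne_zero hba.ne' hb.ne')]; ring]
  rw [show ((a + b) * a - 2 * (a * b)) / ((b - a) * a) = -1 by
    rw [div_eq_iff (mul_ne_zero hba.ne' ha.ne')]; ring]
  rw [Real.arcsin_one, Real.arcsin_neg_one, sub_self, mul_zero, Real.sqrt_zero,
    sub_self, zero_mul, Real.sqrt_zero]
  field_simp
  ring

theorem stmt_6 (σ₁ σ₂ μ : ℝ) (h1 : 0 < σ₁) (h12 : σ₁ < σ₂)
    (hμ : μ = (Real.sqrt σ₂ - Real.sqrt σ₁) ^ 2 / (4 * σ₁ * σ₂)) :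
    ∫ x in σ₁..σ₂, 1 / (2 * π * μ * x ^ 2) * Real.sqrt ((x / σ₁ - 1) * (1 - x / σ₂)) = 1 := by
  have h2 : 0 < σ₂ := h1.trans h12
  have hA : Real.sqrt σ₁ ^ 2 = σ₁ := Real.sq_sqrt h1.le
  have hB : Real.sqrt σ₂ ^ 2 = σ₂ := Real.sq_sqrt h2.le
  have hsa : Real.sqrt σ₁ < Real.sqrt σ₂ := Real.sqrt_lt_sqrt h1.le h12
  have hsa0 : 0 < Real.sqrt σ₁ := Real.sqrt_pos.2 h1
  have hμ0 : 0 < μ := by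
    rw [hμ]
    apply div_pos (pow_pos (by linarith) 2) (by positivity)
  have hsab : 0 < Real.sqrt (σ₁ * σ₂) := Real.sqrt_pos.2 (mul_pos h1 h2)
  have hcong : Set.EqOn (fun x => 1 / (2 * π * μ * x ^ 2) * Real.sqrt ((x / σ₁ - 1) * (1 - x / σ₂)))
      (fun x => 1 / (2 * π * μ * Real.sqrt (σ₁ * σ₂)) * (Real.sqrt ((x - σ₁) * (σ₂ - x)) / x ^ 2))
      (Set.uIcc σ₁ σ₂) := by
    intro x hx
    rw [uIcc_of_le h12.le] at hx
    have hRnn : 0 ≤ (x - σ₁) * (σ₂ - x) := mul_nonneg (by linarith [hx.1]) (by linarith [hx.2])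
    simp only
    rw [show (x / σ₁ - 1) * (1 - x / σ₂) = ((x - σ₁) * (σ₂ - x)) / (σ₁ * σ₂) by
      field_simp; try ring]
    rw [Real.sqrt_div hRnn]
    ring
  rw [intervalIntegral.integral_congr hcong, intervalIntegral.integral_const_mul,
    key_integral σ₁ σ₂ h1 h12]
  have hkey : σ₁ + σ₂ - 2 * Real.sqrt (σ₁ * σ₂) = (Real.sqrt σ₂ - Real.sqrt σ₁) ^ 2 := by
    rw [sub_sq, hA, hB, Real.sqrt_mul h1.le]; ring
  have hab2 : Real.sqrt (σ₁ * σ₂) ^ 2 = σ₁ * σ₂ := Real.sq_sqrt (mul_pos h1 h2).le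
  have hc0 : 0 < σ₁ + σ₂ - 2 * Real.sqrt (σ₁ * σ₂) := by
    rw [hkey]; exact pow_pos (by linarith) 2
  rw [hμ, ← hkey]
  have hB0 : (0:ℝ) < 2 * π * ((σ₁ + σ₂ - 2 * Real.sqrt (σ₁ * σ₂)) / (4 * σ₁ * σ₂)) * Real.sqrt (σ₁ * σ₂) :=
    mul_pos (mul_pos (mul_pos two_pos Real.pi_pos) (div_pos hc0 (by positivity))) hsab
  rw [one_div, inv_mul_eq_div, div_eq_one_iff_eq hB0.ne']
  field_simp
  linear_combination -4 * hab2
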